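/- Let [a,b] be a real interval, t₀ ∈ [a,b], ω ∈ ℝ, and q : [a,b] → ℝ. Suppose w : [a,b] → ℝ is twice differentiable and satisfies w''(t) − (w'(t))² + exp(4w(t))·∫_{t₀}^t exp(2w(s)) ds − ω²q(t) = 0 for all t ∈ [a,b]. Then the function γ(t) = ∫_{t₀}^t exp(2w(s)) ds is three times differentiable on [a,b], γ'(t) = exp(2w(t)) > 0, and γ satisfies the Airy–Kummer equation ω²q(t) − γ(t)(γ'(t))² + (3/4)(γ''(t)/γ'(t))² − (1/2)(γ'''(t)/γ'(t)) = 0 for all t ∈ [a,b]. -/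
import Mathlib


/-- If `w` solves `w'' − (w')² + e^{4w}·∫_{t₀}^t e^{2w} − ω²q = 0` on `[a,b]`, then
`γ(t) = ∫_{t₀}^t e^{2w(s)} ds` is an Airy phase function: it is three times
differentiable, has positive derivative `γ' = e^{2w}`, and satisfies the
Airy–Kummer equation. -/
theorem airy_kummer_from_w
    (a b t₀ ω : ℝ) (ht₀ : t₀ ∈ Set.Icc a b)
    (q : ℝ → ℝ)
    (w w' w'' : ℝ → ℝ)
    (hw : ∀ t ∈ Set.Icc a b, HasDerivWithinAt w (w' t) (Set.Icc a b) t)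
    (hw' : ∀ t ∈ Set.Icc a b, HasDerivWithinAt w' (w'' t) (Set.Icc a b) t)
    (heq : ∀ t ∈ Set.Icc a b,
      w'' t - (w' t) ^ 2
        + Real.exp (4 * w t) * (∫ s in t₀..t, Real.exp (2 * w s))
        - ω ^ 2 * q t = 0)
    (γ : ℝ → ℝ)
    (hγ : ∀ t, γ t = ∫ s in t₀..t, Real.exp (2 * w s)) :
    ∃ γ₁ γ₂ γ₃ : ℝ → ℝ, ∀ t ∈ Set.Icc a b,
      HasDerivWithinAt γ (γ₁ t) (Set.Icc a b) t ∧
      HasDerivWithinAt γ₁ (γ₂ t) (Set.Icc a b) t ∧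
      HasDerivWithinAt γ₂ (γ₃ t) (Set.Icc a b) t ∧
      γ₁ t = Real.exp (2 * w t) ∧ 0 < γ₁ t ∧
      ω ^ 2 * q t - γ t * (γ₁ t) ^ 2 + 3 / 4 * (γ₂ t / γ₁ t) ^ 2
        - 1 / 2 * (γ₃ t / γ₁ t) = 0 := by
  have hab : a ≤ b := le_trans ht₀.1 ht₀.2
  -- clamp function
  set c : ℝ → ℝ := fun t => max a (min b t) with hc
  have hc_mem : ∀ t, c t ∈ Set.Icc a b := by
    intro t
    refine ⟨le_max_left _ _, max_le hab (min_le_left _ _)⟩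
  have hc_id : ∀ t ∈ Set.Icc a b, c t = t := by
    intro t ht
    simp only [hc]
    rw [min_eq_right ht.2, max_eq_right ht.1]
  have hc_cont : Continuous c := continuous_const.max (continuous_const.min continuous_id)
  have hw_cont : ContinuousOn w (Set.Icc a b) := fun t ht =>
    (hw t ht).continuousWithinAt
  -- global continuous extension of exp(2 w)
  set g : ℝ → ℝ := fun t => Real.exp (2 * w (c t)) with hg
  have hg_cont : Continuous g := by
    have : Continuous fun t => w (c t) :=
      hw_cont.comp_continuous hc_cont hc_mem
    exact (Real.continuous_exp.comp (this.const_smul 2)).congr (by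
      intro t; simp [hg, smul_eq_mul])
  have hg_eq : ∀ t ∈ Set.Icc a b, g t = Real.exp (2 * w t) := by
    intro t ht; simp [hg, hc_id t ht]
  set G : ℝ → ℝ := fun t => ∫ s in t₀..t, g s with hG
  have hγG : ∀ t ∈ Set.Icc a b, γ t = G t := by
    intro t ht
    rw [hγ t]
    exact (intervalIntegral.integral_congr fun s hs =>
      (hg_eq s (Set.uIcc_subset_Icc ht₀ ht hs)).symm)
  refine ⟨g, fun t => 2 * w' t * Real.exp (2 * w t),
    fun t => 2 * w'' t * Real.exp (2 * w t)
      + 2 * w' t * (2 * w' t * Real.exp (2 * w t)), ?_⟩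
  intro t ht
  have hGd : HasDerivAt G (g t) t :=
    (hg_cont.integral_hasStrictDerivAt t₀ t).hasDerivAt
  have hγd : HasDerivWithinAt γ (g t) (Set.Icc a b) t :=
    (hGd.hasDerivWithinAt.congr (fun s hs => hγG s hs) (hγG t ht))
  have hE : Real.exp (2 * w t) > 0 := Real.exp_pos _
  have hg1 : HasDerivWithinAt (fun s => Real.exp (2 * w s))
      (2 * w' t * Real.exp (2 * w t)) (Set.Icc a b) t := by
    have := ((hw t ht).const_mul 2).exp
    simpa [mul_comm] using this
  have hgd : HasDerivWithinAt g (2 * w' t * Real.exp (2 * w t)) (Set.Icc a b) t :=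
    hg1.congr (fun s hs => hg_eq s hs) (hg_eq t ht)
  have hg2 : HasDerivWithinAt (fun s => 2 * w' s * Real.exp (2 * w s))
      (2 * w'' t * Real.exp (2 * w t)
        + 2 * w' t * (2 * w' t * Real.exp (2 * w t))) (Set.Icc a b) t := by
    have h1 : HasDerivWithinAt (fun s => 2 * w' s) (2 * w'' t) (Set.Icc a b) t :=
      (hw' t ht).const_mul 2
    exact h1.mul hg1
  refine ⟨hγd, hgd, hg2, hg_eq t ht, by rw [hg_eq t ht]; exact hE, ?_⟩
  have he := heq t ht
  rw [← hγ t] at he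
  have h4 : Real.exp (4 * w t) = Real.exp (2 * w t) * Real.exp (2 * w t) := by
    rw [← Real.exp_add]; ring_nf
  rw [hg_eq t ht]
  have hEne : Real.exp (2 * w t) ≠ 0 := ne_of_gt hE
  have d1 : 2 * w' t * Real.exp (2 * w t) / Real.exp (2 * w t) = 2 * w' t := by
    field_simp
  have d2 : (2 * w'' t * Real.exp (2 * w t)
      + 2 * w' t * (2 * w' t * Real.exp (2 * w t))) / Real.exp (2 * w t)
      = 2 * w'' t + 4 * w' t ^ 2 := by
    field_simp; ring
  rw [d1, d2]
  linear_combination -he + γ t * h4
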